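/- Let N ≥ 3. For integers p ≥ q ≥ r ≥ 0 with p ≥ N−2, the three-variable Schur polynomial π_{p,q,r}(x,y,z) lies in the ideal of ℚ[x,y,z] generated by the complete homogeneous symmetric polynomials h_{N−2}, h_{N−1} and h_N in the variables x, y, z. (This is the dot conversion relation for triple facets of sl(N) foams.) -/

import Mathlib

open MvPolynomial

/-- The Vandermonde determinant in three variables. -/
noncomputable def vand3 : MvPolynomial (Fin 3) ℚ :=
  (X 0 - X 1) * (X 0 - X 2) * (X 1 - X 2)

/-- The alternant `det(x_i^{λ_j + 3 − j})` for the partition `λ = (p,q,r)`. -/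
noncomputable def alternant3 (p q r : ℕ) : MvPolynomial (Fin 3) ℚ :=
  Matrix.det (Matrix.of fun i j : Fin 3 =>
    (X i : MvPolynomial (Fin 3) ℚ) ^ ((![p, q, r] j) + 2 - (j : ℕ)))

/-- The complete homogeneous symmetric polynomial of degree `j` in three variables. -/
noncomputable def hpoly3 (j : ℕ) : MvPolynomial (Fin 3) ℚ :=
  ∑ p ∈ Finset.HasAntidiagonal.antidiagonal j, ∑ q ∈ Finset.HasAntidiagonal.antidiagonal p.2,
    X 0 ^ p.1 * X 1 ^ q.1 * X 2 ^ q.2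

noncomputable def gpoly (n : ℕ) : MvPolynomial (Fin 3) ℚ :=
  ∑ q ∈ Finset.HasAntidiagonal.antidiagonal n, X 1 ^ q.1 * X 2 ^ q.2

lemma hpoly3_eq (n : ℕ) :
    hpoly3 n = ∑ p ∈ Finset.HasAntidiagonal.antidiagonal n, X 0 ^ p.1 * gpoly p.2 := by
  simp [hpoly3, gpoly, Finset.mul_sum, mul_assoc]

lemma hpoly3_zero : hpoly3 0 = 1 := by simp [hpoly3]

lemma gpoly_zero : gpoly 0 = 1 := by simp [gpoly]

lemma gpoly_succ (n : ℕ) : gpoly (n+1) = X 1 * gpoly n + X 2 ^ (n+1) := by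
  rw [gpoly, Finset.Nat.antidiagonal_succ, Finset.sum_cons, Finset.sum_map]
  simp [gpoly, Finset.mul_sum, pow_succ]
  abel_nf
  congr 1
  exact Finset.sum_congr rfl fun x _ => by ring

lemma hpoly3_succ (n : ℕ) : hpoly3 (n+1) = X 0 * hpoly3 n + gpoly (n+1) := by
  rw [hpoly3_eq, Finset.Nat.antidiagonal_succ, Finset.sum_cons, Finset.sum_map]
  rw [hpoly3_eq]
  simp [Finset.mul_sum, pow_succ]
  abel_nf
  congr 1
  exact Finset.sum_congr rfl fun x _ => by ring

noncomputable def hZ (j : ℤ) : MvPolynomial (Fin 3) ℚ :=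
  if 0 ≤ j then hpoly3 j.toNat else 0

noncomputable def gZ (j : ℤ) : MvPolynomial (Fin 3) ℚ :=
  if 0 ≤ j then gpoly j.toNat else 0

noncomputable def zZ (j : ℤ) : MvPolynomial (Fin 3) ℚ :=
  if 0 ≤ j then X 2 ^ j.toNat else 0

lemma hZ_coe (n : ℕ) : hZ n = hpoly3 n := by simp [hZ]

lemma hZ_neg {j : ℤ} (h : j < 0) : hZ j = 0 := by
  rw [hZ, if_neg (by omega)]

lemma hZ_split (j : ℤ) : hZ j = X 0 * hZ (j-1) + gZ j := by
  rcases lt_or_ge j 0 with h | h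
  · rw [hZ, if_neg (by omega), hZ, if_neg (by omega), gZ, if_neg (by omega)]
    ring
  · obtain ⟨n, rfl⟩ := Int.eq_ofNat_of_zero_le h
    cases n with
    | zero =>
      rw [hZ, if_pos (by omega), hZ, if_neg (by omega), gZ, if_pos (by omega)]
      simp [hpoly3_zero, gpoly_zero]
    | succ m =>
      rw [hZ, if_pos (by omega), hZ, if_pos (by omega), gZ, if_pos (by omega)]
      rw [show ((((m:ℕ)+1 : ℕ) : ℤ)).toNat = m + 1 from by omega,
        show ((((m:ℕ)+1 : ℕ) : ℤ) - 1).toNat = m from by omega]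
      rw [hpoly3_succ]

lemma gZ_split (j : ℤ) : gZ j = X 1 * gZ (j-1) + zZ j := by
  rcases lt_or_ge j 0 with h | h
  · rw [gZ, if_neg (by omega), gZ, if_neg (by omega), zZ, if_neg (by omega)]
    ring
  · obtain ⟨n, rfl⟩ := Int.eq_ofNat_of_zero_le h
    cases n with
    | zero =>
      rw [gZ, if_pos (by omega), gZ, if_neg (by omega), zZ, if_pos (by omega)]
      simp [gpoly_zero]
    | succ m =>
      rw [gZ, if_pos (by omega), gZ, if_pos (by omega), zZ, if_pos (by omega)]
      rw [show ((((m:ℕ)+1 : ℕ) : ℤ)).toNat = m + 1 from by omega,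
        show ((((m:ℕ)+1 : ℕ) : ℤ) - 1).toNat = m from by omega]
      rw [gpoly_succ]

lemma zZ_step (j : ℤ) (h : 1 ≤ j) : zZ j = X 2 * zZ (j-1) := by
  rw [zZ, if_pos (by omega), zZ, if_pos (by omega),
    show j.toNat = (j-1).toNat + 1 from by omega, pow_succ]
  ring

lemma gZ_rec (j : ℤ) (h : 1 ≤ j) :
    gZ j - (X 1 + X 2) * gZ (j-1) + X 1 * X 2 * gZ (j-2) = 0 := by
  have h1 := gZ_split j
  have h2 := gZ_split (j-1)
  rw [show j-1-1 = j-2 from by ring] at h2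
  have h3 := zZ_step j h
  linear_combination h1 - X 2 * h2 + h3

lemma hZ_rec (j : ℤ) (h : 1 ≤ j) :
    hZ j = (X 0 + X 1 + X 2) * hZ (j-1)
      - (X 0 * X 1 + X 0 * X 2 + X 1 * X 2) * hZ (j-2)
      + X 0 * X 1 * X 2 * hZ (j-3) := by
  have h1 := hZ_split j
  have h2 := hZ_split (j-1)
  rw [show j-1-1 = j-2 from by ring] at h2
  have h3 := hZ_split (j-2)
  rw [show j-2-1 = j-3 from by ring] at h3
  have hg := gZ_rec j h
  linear_combination h1 - (X 1 + X 2) * h2 + X 1 * X 2 * h3 + hg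

noncomputable def svec : Fin 3 → MvPolynomial (Fin 3) ℚ :=
  ![X 1 + X 2, X 0 + X 2, X 0 + X 1]

noncomputable def pvec : Fin 3 → MvPolynomial (Fin 3) ℚ :=
  ![X 1 * X 2, X 0 * X 2, X 0 * X 1]

lemma Fpow (i : Fin 3) (n : ℕ) :
    hZ n - svec i * hZ ((n:ℤ)-1) + pvec i * hZ ((n:ℤ)-2) = X i ^ n := by
  induction n with
  | zero =>
    rw [show (((0:ℕ):ℤ)) = 0 from rfl, hZ, if_pos le_rfl,
      hZ_neg (by omega), hZ_neg (by omega)]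
    simp [hpoly3_zero]
  | succ n ih =>
    have hD := hZ_rec ((n:ℤ)+1) (by omega)
    rw [show ((n:ℤ)+1-1) = (n:ℤ) from by ring, show ((n:ℤ)+1-2) = (n:ℤ)-1 from by ring,
      show ((n:ℤ)+1-3) = (n:ℤ)-2 from by ring] at hD
    rw [show (((n+1:ℕ)):ℤ) = (n:ℤ)+1 from by push_cast; ring]
    rw [show ((n:ℤ)+1-1) = (n:ℤ) from by ring, show ((n:ℤ)+1-2) = (n:ℤ)-1 from by ring]
    rw [show hZ ((n:ℤ)) = hZ ((n:ℕ):ℤ) from rfl]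
    fin_cases i <;>
      [skip; skip; rw [show (⟨2, by norm_num⟩ : Fin 3) = 2 from rfl] at ih ⊢] <;>
      simp only [svec, pvec, Fin.isValue, Fin.mk_zero, Fin.mk_one,
        Matrix.cons_val_zero, Matrix.cons_val_one, Matrix.head_cons,
        Matrix.cons_val_two, Matrix.tail_cons] at ih ⊢
    · linear_combination hD + X 0 * ih
    · linear_combination hD + X 1 * ih
    · linear_combination hD + X 2 * ih

lemma hmem (N : ℕ) (hN : 3 ≤ N) :
    ∀ j, N - 2 ≤ j →
      hpoly3 j ∈ Ideal.span {hpoly3 (N-2), hpoly3 (N-1), hpoly3 N} := by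
  intro j
  induction j using Nat.strong_induction_on with
  | _ j ih =>
    intro hj
    by_cases hle : j ≤ N
    · have hcase : j = N - 2 ∨ j = N - 1 ∨ j = N := by omega
      rcases hcase with rfl | rfl | rfl <;> exact Ideal.subset_span (by simp)
    · have hrec := hZ_rec (j:ℤ) (by omega)
      rw [show (j:ℤ)-1 = ((j-1 : ℕ):ℤ) from by omega,
        show (j:ℤ)-2 = ((j-2:ℕ):ℤ) from by omega,
        show (j:ℤ)-3 = ((j-3:ℕ):ℤ) from by omega,
        hZ_coe, hZ_coe, hZ_coe, hZ_coe] at hrec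
      rw [hrec]
      exact Ideal.add_mem _ (Ideal.sub_mem _
        (Ideal.mul_mem_left _ _ (ih (j-1) (by omega) (by omega)))
        (Ideal.mul_mem_left _ _ (ih (j-2) (by omega) (by omega))))
        (Ideal.mul_mem_left _ _ (ih (j-3) (by omega) (by omega)))

noncomputable def Cmat : Matrix (Fin 3) (Fin 3) (MvPolynomial (Fin 3) ℚ) :=
  Matrix.of fun i k => ![1, -svec i, pvec i] k

noncomputable def Mmat (p q r : ℕ) : Matrix (Fin 3) (Fin 3) (MvPolynomial (Fin 3) ℚ) :=
  Matrix.of fun k j => hZ (((![p+2, q+1, r] j : ℕ) : ℤ) - (k : ℕ))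

lemma vand3_ne_zero : (vand3 : MvPolynomial (Fin 3) ℚ) ≠ 0 := by
  intro h
  have h2 := congrArg (eval (![2,1,0] : Fin 3 → ℚ)) h
  simp [vand3] at h2
  norm_num at h2

lemma Cmat_det : Cmat.det = -vand3 := by
  rw [Matrix.det_fin_three]
  simp only [Cmat, Matrix.of_apply, Matrix.cons_val_zero, Matrix.cons_val_one,
    Matrix.head_cons, Matrix.cons_val_two, Matrix.tail_cons, svec, pvec]
  rw [vand3]; ring

lemma alt_factor (p q r : ℕ) :
    alternant3 p q r = Cmat.det * (Mmat p q r).det := by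
  rw [alternant3, ← Matrix.det_mul]
  congr 1
  refine Matrix.ext fun i j => ?_
  rw [Matrix.mul_apply, Fin.sum_univ_three, Matrix.of_apply]
  have ha : (![p, q, r] j) + 2 - (j : ℕ) = ![p+2, q+1, r] j := by
    fin_cases j <;> simp
  rw [ha]
  have key := Fpow i (![p+2, q+1, r] j)
  simp only [Cmat, Mmat, Matrix.of_apply, Matrix.cons_val_zero, Matrix.cons_val_one,
    Matrix.head_cons, Matrix.cons_val_two, Matrix.tail_cons, Fin.val_zero, Fin.val_one,
    Fin.val_two, Nat.cast_zero, Nat.cast_one, Nat.cast_ofNat, sub_zero]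
  linear_combination -key

/-- Dot conversion for triple facets: for `N ≥ 3` and `p ≥ q ≥ r ≥ 0` with
`p ≥ N−2`, the Schur polynomial `π_{p,q,r}` (defined implicitly as the
alternant-over-Vandermonde ratio) lies in the ideal `(h_{N−2}, h_{N−1}, h_N)`. -/
theorem schur3_mem_ideal (N : ℕ) (hN : 3 ≤ N) (p q r : ℕ)
    (hpq : q ≤ p) (hqr : r ≤ q) (hp : N - 2 ≤ p)
    (S : MvPolynomial (Fin 3) ℚ) (hS : vand3 * S = alternant3 p q r) :
    S ∈ Ideal.span {hpoly3 (N - 2), hpoly3 (N - 1), hpoly3 N} := by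
  have hSM : S = -(Mmat p q r).det := by
    apply mul_left_cancel₀ vand3_ne_zero
    rw [hS, alt_factor, Cmat_det]; ring
  rw [hSM]
  apply neg_mem
  rw [Matrix.det_fin_three]
  have m0 : Mmat p q r 0 0 ∈ Ideal.span {hpoly3 (N - 2), hpoly3 (N - 1), hpoly3 N} := by
    have e : Mmat p q r 0 0 = hpoly3 (p+2) := by
      simp only [Mmat, Matrix.of_apply, Matrix.cons_val_zero, Fin.val_zero,
        Nat.cast_zero, sub_zero, hZ_coe]
    rw [e]; exact hmem N hN _ (by omega)
  have m1 : Mmat p q r 1 0 ∈ Ideal.span {hpoly3 (N - 2), hpoly3 (N - 1), hpoly3 N} := by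
    have e : Mmat p q r 1 0 = hpoly3 (p+1) := by
      simp only [Mmat, Matrix.of_apply, Matrix.cons_val_zero, Fin.val_one, Nat.cast_one]
      rw [show ((p+2:ℕ):ℤ) - 1 = ((p+1:ℕ):ℤ) from by push_cast; ring, hZ_coe]
    rw [e]; exact hmem N hN _ (by omega)
  have m2 : Mmat p q r 2 0 ∈ Ideal.span {hpoly3 (N - 2), hpoly3 (N - 1), hpoly3 N} := by
    have e : Mmat p q r 2 0 = hpoly3 p := by
      simp only [Mmat, Matrix.of_apply, Matrix.cons_val_zero, Fin.val_two, Nat.cast_ofNat]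
      rw [show ((p+2:ℕ):ℤ) - 2 = ((p:ℕ):ℤ) from by push_cast; ring, hZ_coe]
    rw [e]; exact hmem N hN _ (by omega)
  exact Ideal.sub_mem _ (Ideal.add_mem _ (Ideal.add_mem _ (Ideal.sub_mem _
    (Ideal.sub_mem _
      (Ideal.mul_mem_right _ _ (Ideal.mul_mem_right _ _ m0))
      (Ideal.mul_mem_right _ _ (Ideal.mul_mem_right _ _ m0)))
    (Ideal.mul_mem_right _ _ (Ideal.mul_mem_left _ _ m1)))
    (Ideal.mul_mem_left _ _ m2))
    (Ideal.mul_mem_right _ _ (Ideal.mul_mem_left _ _ m1)))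
    (Ideal.mul_mem_left _ _ m2)
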